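/- Let F be a standard Borel space. The map ι : Finset F → Measure F is injective, and it maps every measurable subset of the instance space 𝔻 to a measurable subset of Measure F (with respect to the canonical σ-algebra on Measure F); in particular, the range of ι is a measurable subset of Measure F. Hence ι is a measurable embedding of 𝔻 into Measure F. -/

import Mathlib

open MeasureTheory

/-- The canonical embedding of a database instance (a finite set of facts)
into the space of measures: `S ↦ ∑_{x ∈ S} δ_x`. -/
noncomputable def iota {F : Type*} [MeasurableSpace F] (S : Finset F) : Measure F :=
  ∑ x ∈ S, Measure.dirac x

/-- The instance space `𝔻`: `Finset F` equipped with the σ-algebra comapped along `ι`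
from the canonical σ-algebra on `Measure F`. -/
noncomputable instance instanceSpace (F : Type*) [MeasurableSpace F] : MeasurableSpace (Finset F) :=
  MeasurableSpace.comap iota inferInstance

open scoped ENNReal

namespace IotaAux
open scoped Classical

open MeasurableSpace Set

variable {F : Type*} [MeasurableSpace F]

lemma iota_apply (S : Finset F) {A : Set F} (hA : MeasurableSet A) :
    iota S A = ((S.filter (· ∈ A)).card : ℝ≥0∞) := by
  classical
  rw [iota, Measure.finset_sum_apply]
  rw [Finset.sum_congr rfl (fun x _ => Measure.dirac_apply' x hA)]
  simp only [Set.indicator_apply, Pi.one_apply]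
  rw [Finset.sum_ite, Finset.sum_const, Finset.sum_const]
  simp

section CG

variable [CountablyGenerated F]

/-- The cell of the partition generated by the first `n` generating sets,
with membership pattern `g`. -/
def cell (n : ℕ) (g : Fin n → Bool) : Set F :=
  ⋂ i : Fin n, if g i then natGeneratingSequence F i else (natGeneratingSequence F i)ᶜ

lemma measurableSet_cell (n : ℕ) (g : Fin n → Bool) : MeasurableSet (cell (F := F) n g) := by
  refine MeasurableSet.iInter fun i => ?_
  split
  · exact measurableSet_natGeneratingSequence _
  · exact (measurableSet_natGeneratingSequence _).compl

lemma mem_cell_iff {n : ℕ} {g : Fin n → Bool} {x : F} :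
    x ∈ cell n g ↔ ∀ i : Fin n, (x ∈ natGeneratingSequence F i ↔ g i = true) := by
  simp only [cell, mem_iInter]
  refine forall_congr' fun i => ?_
  cases hgi : g i <;> simp [hgi]

/-- The membership pattern of a point. -/
noncomputable def patt (n : ℕ) (x : F) : Fin n → Bool :=
  fun i => if x ∈ natGeneratingSequence F i then true else false

lemma patt_eq_true_iff {n : ℕ} {x : F} {i : Fin n} :
    patt n x i = true ↔ x ∈ natGeneratingSequence F i := by
  simp only [patt]; split <;> simp_all

lemma mem_cell_patt (n : ℕ) (x : F) : x ∈ cell n (patt n x) := by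
  rw [mem_cell_iff]; intro i; rw [patt_eq_true_iff]

lemma patt_eq_of_mem {n : ℕ} {g : Fin n → Bool} {x : F} (h : x ∈ cell n g) :
    patt n x = g := by
  rw [mem_cell_iff] at h
  funext i
  cases hgi : g i
  · rw [← Bool.not_eq_true] at hgi ⊢
    rw [patt_eq_true_iff]
    intro hx
    exact hgi ((h i).mp hx)
  · rw [patt_eq_true_iff]
    exact (h i).mpr hgi

lemma cell_disjoint {n : ℕ} {g g' : Fin n → Bool} (h : g ≠ g') :
    Disjoint (cell (F := F) n g) (cell n g') := by
  rw [Set.disjoint_left]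
  intro x hx hx'
  exact h ((patt_eq_of_mem hx).symm.trans (patt_eq_of_mem hx'))

lemma iUnion_cell (n : ℕ) : (⋃ g : Fin n → Bool, cell (F := F) n g) = univ := by
  refine eq_univ_of_forall fun x => mem_iUnion.mpr ⟨patt n x, mem_cell_patt n x⟩

/-- restriction of a pattern -/
def res {n m : ℕ} (h : n ≤ m) (g : Fin m → Bool) : Fin n → Bool :=
  fun i => g (Fin.castLE h i)

lemma res_patt {n m : ℕ} (h : n ≤ m) (x : F) : res h (patt m x) = patt n x := rfl

lemma cell_subset_res {n m : ℕ} (h : n ≤ m) (g : Fin m → Bool) :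
    cell (F := F) m g ⊆ cell n (res h g) := by
  intro x hx
  have := patt_eq_of_mem hx
  subst this
  rw [res_patt]
  exact mem_cell_patt n x

lemma measure_biUnion_cell (μ : Measure F) {m : ℕ} (T : Finset (Fin m → Bool)) :
    μ (⋃ g ∈ T, cell m g) = ∑ g ∈ T, μ (cell m g) :=
  measure_biUnion_finset
    (fun g _ g' _ hgg' => cell_disjoint hgg')
    (fun g _ => measurableSet_cell m g)

lemma cell_eq_biUnion {n m : ℕ} (h : n ≤ m) (p : Fin n → Bool) :
    cell (F := F) n p
      = ⋃ g ∈ Finset.univ.filter (fun g : Fin m → Bool => res h g = p), cell m g := by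
  apply Set.Subset.antisymm
  · intro x hx
    refine mem_iUnion₂.mpr ⟨patt m x, ?_, mem_cell_patt m x⟩
    simp only [Finset.mem_filter, Finset.mem_univ, true_and]
    rw [res_patt, patt_eq_of_mem hx]
  · refine iUnion₂_subset fun g hg => ?_
    rw [Finset.mem_filter] at hg
    rw [← hg.2]
    exact cell_subset_res h g

lemma cell_inter_gen_eq {n m : ℕ} (h : n ≤ m) (p : Fin n → Bool) {j : ℕ} (hj : j < m) :
    cell (F := F) n p ∩ natGeneratingSequence F j
      = ⋃ g ∈ Finset.univ.filter
          (fun g : Fin m → Bool => res h g = p ∧ g ⟨j, hj⟩ = true), cell m g := by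
  apply Set.Subset.antisymm
  · rintro x ⟨hx, hxj⟩
    refine mem_iUnion₂.mpr ⟨patt m x, ?_, mem_cell_patt m x⟩
    simp only [Finset.mem_filter, Finset.mem_univ, true_and]
    refine ⟨by rw [res_patt, patt_eq_of_mem hx], ?_⟩
    exact patt_eq_true_iff.mpr hxj
  · refine iUnion₂_subset fun g hg => ?_
    rw [Finset.mem_filter] at hg
    intro x hx
    have hp := patt_eq_of_mem hx
    constructor
    · have : x ∈ cell n (res h g) := cell_subset_res h g hx
      rwa [hg.2.1] at this
    · have hpx : patt m x ⟨j, hj⟩ = true := by rw [hp]; exact hg.2.2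
      exact patt_eq_true_iff.mp hpx

/-- `μ` takes values in `ℕ` on all cells. -/
def NatVal (μ : Measure F) : Prop :=
  ∀ (n : ℕ) (g : Fin n → Bool), ∃ k : ℕ, μ (cell n g) = k

lemma natVal_inter_gen {μ : Measure F} (hμ : NatVal μ) (n : ℕ) (p : Fin n → Bool) (j : ℕ) :
    ∃ k : ℕ, μ (cell n p ∩ natGeneratingSequence F j) = k := by
  have hn : n ≤ max n (j + 1) := le_max_left _ _
  have hj : j < max n (j + 1) := lt_of_lt_of_le (Nat.lt_succ_self j) (le_max_right _ _)
  rw [cell_inter_gen_eq hn p hj, measure_biUnion_cell]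
  choose kv hkv using fun g => hμ (max n (j + 1)) g
  refine ⟨∑ g ∈ Finset.univ.filter
    (fun g : Fin (max n (j+1)) → Bool => res hn g = p ∧ g ⟨j, hj⟩ = true), kv g, ?_⟩
  rw [Finset.sum_congr rfl fun g _ => hkv g]
  rw [Nat.cast_sum]

lemma exists_sep [SeparatesPoints F] {x y : F} (h : x ≠ y) :
    ∃ j : ℕ, ¬ (x ∈ natGeneratingSequence F j ↔ y ∈ natGeneratingSequence F j) := by
  by_contra hc
  simp only [not_exists, not_not] at hc
  haveI : @SeparatesPoints F (generateFrom (Set.range (natGeneratingSequence F))) := by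
    rw [generateFrom_natGeneratingSequence]; infer_instance
  exact h (separating_of_generateFrom (Set.range (natGeneratingSequence F)) x y
    (by rintro s ⟨j, rfl⟩; exact hc j))

lemma exists_dirac_point [SeparatesPoints F] [MeasurableSingletonClass F]
    {μ : Measure F} (hNV : NatVal μ) {N : ℕ} {p : Fin N → Bool}
    (hB : μ (cell N p) = 1) :
    ∃ x ∈ cell N p, μ {x} = 1 ∧ μ (cell N p \ {x}) = 0 := by
  set B := cell (F := F) N p with hBdef
  have hBm : MeasurableSet B := measurableSet_cell N p
  have hchoice : ∀ j : ℕ, ∃ C : Set F, C ⊆ B ∧ MeasurableSet C ∧ μ C = 1 ∧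
      ((C ⊆ natGeneratingSequence F j) ∨ C ⊆ (natGeneratingSequence F j)ᶜ) := by
    intro j
    obtain ⟨k, hk⟩ := natVal_inter_gen hNV N p j
    have hle : μ (B ∩ natGeneratingSequence F j) ≤ 1 := by
      rw [← hB]; exact measure_mono inter_subset_left
    have hsum : μ (B ∩ natGeneratingSequence F j) + μ (B \ natGeneratingSequence F j) = μ B :=
      measure_inter_add_diff B (measurableSet_natGeneratingSequence j)
    have hk1 : k ≤ 1 := by
      rw [hk] at hle
      exact_mod_cast hle
    interval_cases k
    · refine ⟨B \ natGeneratingSequence F j, diff_subset, hBm.diff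
        (measurableSet_natGeneratingSequence j), ?_, Or.inr ?_⟩
      · rw [hk] at hsum
        rw [Nat.cast_zero, zero_add] at hsum
        rw [hsum, hB]
      · intro x hx
        exact hx.2
    · refine ⟨B ∩ natGeneratingSequence F j, inter_subset_left,
        hBm.inter (measurableSet_natGeneratingSequence j), by rw [hk]; norm_num,
        Or.inl inter_subset_right⟩
  choose C hCB hCm hC1 hCside using hchoice
  set D : ℕ → Set F := fun m => B ∩ ⋂ j ∈ Finset.range m, C j with hD
  have hDm : ∀ m, MeasurableSet (D m) := fun m =>
    hBm.inter (MeasurableSet.biInter (Finset.range m).countable_toSet fun j _ => hCm j)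
  have hDanti : Antitone D := by
    intro a b hab x hx
    simp only [hD, mem_inter_iff, mem_iInter, Finset.mem_range] at hx ⊢
    exact ⟨hx.1, fun j hj => hx.2 j (lt_of_lt_of_le hj hab)⟩
  have hDsubB : ∀ m, D m ⊆ B := fun m => inter_subset_left
  have hDsubC : ∀ j, D (j + 1) ⊆ C j := by
    intro j x hx
    simp only [hD, mem_inter_iff, mem_iInter, Finset.mem_range] at hx
    exact hx.2 j (Nat.lt_succ_self j)
  have hD1 : ∀ m, μ (D m) = 1 := by
    intro m
    induction m with
    | zero => simpa [hD] using hB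
    | succ m ih =>
      have hstep : D (m + 1) = D m ∩ C m := by
        simp only [hD, Finset.range_add_one]
        rw [Finset.set_biInter_insert]
        ext x
        simp only [mem_inter_iff, mem_iInter]
        tauto
      rw [hstep]
      have key := measure_union_add_inter (μ := μ) (D m) (hCm m)
      have hUle : μ (D m ∪ C m) ≤ 1 := by
        calc μ (D m ∪ C m) ≤ μ B := measure_mono (union_subset (hDsubB m) (hCB m))
        _ = 1 := hB
      have hge : 1 ≤ μ (D m ∩ C m) := by
        have h2 : (1 : ℝ≥0∞) + 1 ≤ μ (D m ∪ C m) + μ (D m ∩ C m) := by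
          rw [key, ih, hC1]
        have h3 : (1 : ℝ≥0∞) + 1 ≤ 1 + μ (D m ∩ C m) :=
          h2.trans (add_le_add hUle le_rfl)
        exact (ENNReal.add_le_add_iff_left ENNReal.one_ne_top).mp h3
      exact le_antisymm (le_trans (measure_mono inter_subset_left) ih.le) hge
  have hKm : μ (⋂ m, D m) = 1 := by
    rw [Directed.measure_iInter (fun m => (hDm m).nullMeasurableSet) hDanti.directed_ge
      ⟨0, by rw [hD1 0]; exact ENNReal.one_ne_top⟩]
    simp [hD1]
  obtain ⟨x, hxK⟩ : (⋂ m, D m).Nonempty :=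
    nonempty_of_measure_ne_zero (by rw [hKm]; exact one_ne_zero)
  have hKsub : (⋂ m, D m) ⊆ {x} := by
    intro y hyK
    simp only [mem_singleton_iff]
    by_contra hyx
    obtain ⟨j, hj⟩ := exists_sep (F := F) hyx
    have hxC : x ∈ C j := hDsubC j (mem_iInter.mp hxK (j + 1))
    have hyC : y ∈ C j := hDsubC j (mem_iInter.mp hyK (j + 1))
    rcases hCside j with hside | hside
    · exact hj (iff_of_true (hside hyC) (hside hxC))
    · exact hj (iff_of_false (hside hyC) (hside hxC))
  have hxB : x ∈ B := hDsubB 0 (mem_iInter.mp hxK 0)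
  have hx1 : μ {x} = 1 := by
    refine le_antisymm ?_ ?_
    · rw [← hB]
      exact measure_mono (singleton_subset_iff.mpr hxB)
    · rw [← hKm]
      exact measure_mono hKsub
  refine ⟨x, hxB, hx1, ?_⟩
  rw [measure_diff (singleton_subset_iff.mpr hxB)
    (measurableSet_singleton x).nullMeasurableSet (by rw [hx1]; exact ENNReal.one_ne_top), hx1, hB]
  simp

lemma eq_iota_of_conditions [SeparatesPoints F] [MeasurableSingletonClass F]
    {μ : Measure F} {k : ℕ} (hk : μ Set.univ = k) (hNV : NatVal μ) {n : ℕ}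
    {T : Finset (Fin n → Bool)} (hT : T.card = k)
    (hge : ∀ g ∈ T, 1 ≤ μ (cell n g)) :
    ∃ S : Finset F, iota S = μ := by
  rcases isEmpty_or_nonempty F with hF | hF
  · refine ⟨∅, Measure.ext fun E _ => ?_⟩
    rw [Set.eq_empty_of_isEmpty E]
    simp [iota]
  choose kv hkv using fun g => hNV n g
  have huniv : μ Set.univ = ∑ g : Fin n → Bool, μ (cell n g) := by
    rw [← measure_biUnion_cell μ Finset.univ]
    congr 1
    rw [← iUnion_cell (F := F) n]
    simp
  have htot : ∑ g : Fin n → Bool, kv g = k := by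
    have h2 := huniv
    rw [hk, Finset.sum_congr rfl fun g _ => hkv g, ← Nat.cast_sum] at h2
    exact_mod_cast h2.symm
  have hT1 : ∀ g ∈ T, kv g = 1 := by
    intro g hg
    by_contra hne
    have h1 : 1 ≤ kv g := by
      have := hge g hg
      rw [hkv g] at this
      exact_mod_cast this
    have h2 : 2 ≤ kv g := by omega
    have hlt : T.card < ∑ g ∈ T, kv g := by
      rw [Finset.card_eq_sum_ones]
      refine Finset.sum_lt_sum (fun i hi => ?_) ⟨g, hg, by omega⟩
      have := hge i hi
      rw [hkv i] at this
      exact_mod_cast this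
    have hle : ∑ g ∈ T, kv g ≤ ∑ g : Fin n → Bool, kv g :=
      Finset.sum_le_sum_of_subset (Finset.subset_univ T)
    omega
  have hT0 : ∀ g ∉ T, kv g = 0 := by
    have hTsum : ∑ g ∈ T, kv g = k := by
      rw [Finset.sum_congr rfl hT1, Finset.sum_const, smul_eq_mul, mul_one, hT]
    have hsdiff : ∑ g ∈ Finset.univ \ T, kv g + ∑ g ∈ T, kv g = k := by
      rw [Finset.sum_sdiff (Finset.subset_univ T), htot]
    have hzero : ∑ g ∈ Finset.univ \ T, kv g = 0 := by omega
    intro g hg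
    have hmem : g ∈ Finset.univ \ T := Finset.mem_sdiff.mpr ⟨Finset.mem_univ g, hg⟩
    exact Finset.sum_eq_zero_iff.mp hzero g hmem
  have hpt : ∀ g ∈ T, ∃ x, x ∈ cell n g ∧ μ {x} = 1 ∧ μ (cell n g \ {x}) = 0 := by
    intro g hg
    obtain ⟨x, hx1, hx2, hx3⟩ := exists_dirac_point hNV
      (show μ (cell n g) = 1 by rw [hkv g, hT1 g hg, Nat.cast_one])
    exact ⟨x, hx1, hx2, hx3⟩
  choose! pt hpt1 hpt2 hpt3 using hpt
  have hinj : Set.InjOn pt (T : Set (Fin n → Bool)) := by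
    intro g hg g' hg' he
    by_contra hne
    exact Set.disjoint_left.mp (cell_disjoint hne) (hpt1 g hg) (he ▸ hpt1 g' hg')
  refine ⟨T.image pt, ?_⟩
  apply Measure.ext
  intro E hE
  rw [iota_apply _ hE]
  have hEsplit : μ E = ∑ g : Fin n → Bool, μ (E ∩ cell n g) := by
    have hEeq : E = ⋃ g ∈ (Finset.univ : Finset (Fin n → Bool)), E ∩ cell n g := by
      ext x
      simp only [Finset.mem_univ, mem_iUnion, mem_inter_iff, iUnion_true]
      exact ⟨fun hx => ⟨patt n x, hx, mem_cell_patt n x⟩, fun ⟨g, hx, _⟩ => hx⟩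
    conv_lhs => rw [hEeq]
    exact measure_biUnion_finset
      (fun g _ g' _ h => ((cell_disjoint h).mono inter_subset_right inter_subset_right))
      (fun g _ => hE.inter (measurableSet_cell n g))
  have hterm : ∀ g : Fin n → Bool,
      μ (E ∩ cell n g) = if g ∈ T ∧ pt g ∈ E then 1 else 0 := by
    intro g
    by_cases hg : g ∈ T
    · by_cases hptE : pt g ∈ E
      · simp only [hg, hptE, and_self, if_true]
        refine le_antisymm ?_ ?_
        · calc μ (E ∩ cell n g) ≤ μ (cell n g) := measure_mono inter_subset_right
          _ = 1 := by rw [hkv g, hT1 g hg, Nat.cast_one]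
        · calc (1 : ℝ≥0∞) = μ {pt g} := (hpt2 g hg).symm
          _ ≤ μ (E ∩ cell n g) := measure_mono
            (singleton_subset_iff.mpr ⟨hptE, hpt1 g hg⟩)
      · simp only [hg, hptE, and_false, if_false]
        refine le_antisymm ?_ zero_le
        calc μ (E ∩ cell n g) ≤ μ (cell n g \ {pt g}) := by
              refine measure_mono fun x hx => ⟨hx.2, ?_⟩
              simp only [mem_singleton_iff]
              rintro rfl
              exact hptE hx.1
          _ = 0 := hpt3 g hg
    · simp only [hg, false_and, if_false]
      refine le_antisymm ?_ zero_le
      calc μ (E ∩ cell n g) ≤ μ (cell n g) := measure_mono inter_subset_right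
        _ = 0 := by rw [hkv g, hT0 g hg, Nat.cast_zero]
  rw [hEsplit, Finset.sum_congr rfl fun g _ => hterm g]
  rw [Finset.sum_ite, Finset.sum_const, Finset.sum_const]
  simp only [nsmul_eq_mul, mul_one, mul_zero, add_zero]
  have hfilter : Finset.univ.filter (fun g : Fin n → Bool => g ∈ T ∧ pt g ∈ E)
      = T.filter (fun g => pt g ∈ E) := by
    ext g
    simp [Finset.mem_filter, and_comm]
  rw [hfilter]
  have himg : (T.image pt).filter (· ∈ E) = (T.filter (fun g => pt g ∈ E)).image pt := by
    ext y
    simp only [Finset.mem_filter, Finset.mem_image]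
    constructor
    · rintro ⟨⟨g, hg, rfl⟩, hy⟩
      exact ⟨g, ⟨hg, hy⟩, rfl⟩
    · rintro ⟨g, ⟨hg, hy⟩, rfl⟩
      exact ⟨⟨g, hg, rfl⟩, hy⟩
  rw [himg, Finset.card_image_of_injOn (hinj.mono (Finset.coe_subset.mpr (Finset.filter_subset _ _)))]

lemma iota_univ (S : Finset F) : iota S Set.univ = S.card := by
  rw [iota_apply S MeasurableSet.univ]
  simp

lemma natVal_iota (S : Finset F) : NatVal (iota S) := fun n g =>
  ⟨_, iota_apply S (measurableSet_cell n g)⟩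

lemma iota_conditions [SeparatesPoints F] (S : Finset F) :
    ∃ (n : ℕ) (T : Finset (Fin n → Bool)), T.card = S.card ∧
      ∀ g ∈ T, 1 ≤ iota S (cell n g) := by
  have jspec : ∀ a b : F, a ≠ b → ∃ j : ℕ,
      ¬ (a ∈ natGeneratingSequence F j ↔ b ∈ natGeneratingSequence F j) :=
    fun a b h => exists_sep h
  set jfun : F → F → ℕ := fun a b => if h : a ≠ b then (jspec a b h).choose else 0 with hjfun
  set n := ((S ×ˢ S).sup fun q => jfun q.1 q.2) + 1 with hn
  refine ⟨n, S.image (patt n), ?_, ?_⟩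
  · refine Finset.card_image_of_injOn ?_
    intro a ha b hb hab
    by_contra hne
    have hj : ¬ (a ∈ natGeneratingSequence F (jfun a b) ↔
        b ∈ natGeneratingSequence F (jfun a b)) := by
      rw [hjfun]
      simp only [dif_pos hne]
      exact (jspec a b hne).choose_spec
    have hjn : jfun a b < n := by
      have : jfun a b ≤ (S ×ˢ S).sup fun q => jfun q.1 q.2 :=
        Finset.le_sup (f := fun q => jfun q.1 q.2)
          (show (a, b) ∈ S ×ˢ S from
            Finset.mem_product.mpr ⟨Finset.mem_coe.mp ha, Finset.mem_coe.mp hb⟩)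
      omega
    apply hj
    have h1 := patt_eq_true_iff (n := n) (x := a) (i := ⟨jfun a b, hjn⟩)
    have h2 := patt_eq_true_iff (n := n) (x := b) (i := ⟨jfun a b, hjn⟩)
    rw [← h1, ← h2, hab]
  · intro g hg
    obtain ⟨a, ha, rfl⟩ := Finset.mem_image.mp hg
    rw [iota_apply S (measurableSet_cell n (patt n a))]
    have hmem : a ∈ S.filter (· ∈ cell n (patt n a)) :=
      Finset.mem_filter.mpr ⟨ha, mem_cell_patt n a⟩
    have hpos : 0 < (S.filter (· ∈ cell n (patt n a))).card :=
      Finset.card_pos.mpr ⟨a, hmem⟩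
    exact_mod_cast hpos

/-- The characterizing set for the range of `iota`. -/
def RSet (F : Type*) [MeasurableSpace F] [CountablyGenerated F] : Set (Measure F) :=
  ⋃ k : ℕ, ({μ : Measure F | μ Set.univ = (k : ℝ≥0∞)} ∩ {μ | NatVal μ}) ∩
    ⋃ (n : ℕ) (T : Finset (Fin n → Bool)) (_ : T.card = k),
      {μ : Measure F | ∀ g ∈ T, 1 ≤ μ (cell n g)}

lemma measurableSet_RSet : MeasurableSet (RSet F) := by
  refine MeasurableSet.iUnion fun k => ?_
  refine MeasurableSet.inter (MeasurableSet.inter ?_ ?_) ?_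
  · exact Measure.measurable_coe MeasurableSet.univ (measurableSet_singleton _)
  · have heq : {μ : Measure F | NatVal μ}
        = ⋂ (n : ℕ), ⋂ (g : Fin n → Bool), ⋃ (k : ℕ),
            {μ : Measure F | μ (cell n g) = (k : ℝ≥0∞)} := by
      ext μ
      simp only [mem_setOf_eq, mem_iInter, mem_iUnion, NatVal]
    rw [heq]
    refine MeasurableSet.iInter fun m => ?_
    refine MeasurableSet.iInter fun g => ?_
    refine MeasurableSet.iUnion fun j => ?_
    exact Measure.measurable_coe (measurableSet_cell m g) (measurableSet_singleton _)
  · refine MeasurableSet.iUnion fun m => ?_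
    refine MeasurableSet.iUnion fun T => ?_
    refine MeasurableSet.iUnion fun _ => ?_
    have heq : {μ : Measure F | ∀ g ∈ T, 1 ≤ μ (cell m g)}
        = ⋂ g ∈ T, (fun μ : Measure F => μ (cell m g)) ⁻¹' (Set.Ici 1) := by
      ext μ
      simp [Set.mem_iInter]
    rw [heq]
    exact MeasurableSet.biInter T.countable_toSet fun g _ =>
      Measure.measurable_coe (measurableSet_cell m g) measurableSet_Ici

lemma range_iota_eq [SeparatesPoints F] [MeasurableSingletonClass F] :
    Set.range (iota : Finset F → Measure F) = RSet F := by
  apply Set.Subset.antisymm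
  · rintro _ ⟨S, rfl⟩
    refine mem_iUnion.mpr ⟨S.card, ⟨⟨iota_univ S, natVal_iota S⟩, ?_⟩⟩
    obtain ⟨n, T, hT, hge⟩ := iota_conditions S
    exact mem_iUnion.mpr ⟨n, mem_iUnion.mpr ⟨T, mem_iUnion.mpr ⟨hT, hge⟩⟩⟩
  · intro μ hμ
    obtain ⟨k, ⟨⟨hk, hNV⟩, hrest⟩⟩ := mem_iUnion.mp hμ
    obtain ⟨n, hrest⟩ := mem_iUnion.mp hrest
    obtain ⟨T, hrest⟩ := mem_iUnion.mp hrest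
    obtain ⟨hT, hge⟩ := mem_iUnion.mp hrest
    obtain ⟨S, hS⟩ := eq_iota_of_conditions hk hNV hT hge
    exact ⟨S, hS⟩

end CG

lemma iota_injective [MeasurableSingletonClass F] :
    Function.Injective (iota : Finset F → Measure F) := by
  intro S T h
  ext x
  have hx := congrArg (fun μ : Measure F => μ {x}) h
  rw [iota_apply S (measurableSet_singleton x), iota_apply T (measurableSet_singleton x)] at hx
  have hcard : (S.filter (· ∈ ({x} : Set F))).card = (T.filter (· ∈ ({x} : Set F))).card := by
    exact_mod_cast hx
  have hSf : ∀ (U : Finset F), U.filter (· ∈ ({x} : Set F)) = if x ∈ U then {x} else ∅ := by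
    intro U
    split
    · ext y
      simp only [Finset.mem_filter, mem_singleton_iff, Finset.mem_singleton]
      constructor
      · rintro ⟨_, rfl⟩; rfl
      · rintro rfl; exact ⟨by assumption, rfl⟩
    · ext y
      simp only [Finset.mem_filter, mem_singleton_iff, Finset.notMem_empty, iff_false]
      rintro ⟨hy, rfl⟩
      exact absurd hy (by assumption)
  rw [hSf S, hSf T] at hcard
  by_cases hxS : x ∈ S <;> by_cases hxT : x ∈ T <;> simp_all

end IotaAux

/-- `ι` is injective, maps measurable subsets of the instance space `𝔻` to measurable
subsets of `Measure F`, has measurable range, and hence is a measurable embedding of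
`𝔻` into `Measure F`. -/
theorem iota_measurableEmbedding (F : Type*) [MeasurableSpace F] [StandardBorelSpace F] :
    Function.Injective (iota : Finset F → Measure F) ∧
    (∀ s : Set (Finset F), MeasurableSet s → MeasurableSet (iota '' s)) ∧
    MeasurableSet (Set.range (iota : Finset F → Measure F)) ∧
    MeasurableEmbedding (iota : Finset F → Measure F) := by
  letI := upgradeStandardBorel F
  haveI : MeasurableSingletonClass F := inferInstance
  have hinj : Function.Injective (iota : Finset F → Measure F) := IotaAux.iota_injective
  have hrange : MeasurableSet (Set.range (iota : Finset F → Measure F)) := by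
    rw [IotaAux.range_iota_eq]
    exact IotaAux.measurableSet_RSet
  have himg : ∀ s : Set (Finset F), MeasurableSet s → MeasurableSet (iota '' s) := by
    intro s hs
    obtain ⟨B, hB, rfl⟩ := hs
    rw [Set.image_preimage_eq_inter_range]
    exact hB.inter hrange
  exact ⟨hinj, himg, hrange,
    { injective := hinj
      measurable := measurable_iff_comap_le.mpr le_rfl
      measurableSet_image' := fun s hs => himg s hs }⟩
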